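/- Let G = (V, E) be an undirected graph on V = {1,...,q}, let S be a q×q real symmetric positive definite matrix, and let B be a covariance selection of S with respect to G, i.e., B is positive definite, B_{ij} = S_{ij} whenever i = j or (i,j) ∈ E, and (B⁻¹)_{ij} = 0 whenever i ≠ j and (i,j) ∉ E. Then for every q×q real symmetric positive definite matrix Σ satisfying (Σ⁻¹)_{ij} = 0 for all i ≠ j with (i,j) ∉ E, one has tr(Σ⁻¹ S) + log det Σ ≥ tr(B⁻¹ S) + log det B = q + log det B, with equality if and only if Σ = B. -/

import Mathlib

open Matrix Finset

lemma trace_eq_of_support {q : ℕ} (G : SimpleGraph (Fin q)) (X S B : Matrix (Fin q) (Fin q) ℝ)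
    (hX : ∀ i j, i ≠ j → ¬ G.Adj i j → X i j = 0)
    (hSB : ∀ i j, (i = j ∨ G.Adj i j) → B i j = S i j) :
    (X * S).trace = (X * B).trace := by
  simp only [Matrix.trace, Matrix.diag, Matrix.mul_apply]
  refine Finset.sum_congr rfl fun i _ => Finset.sum_congr rfl fun j _ => ?_
  by_cases hij : i = j
  · subst hij; rw [hSB i i (Or.inl rfl)]
  by_cases hadj : G.Adj i j
  · rw [hSB j i (Or.inr (G.adj_symm hadj))]
  · rw [hX i j hij hadj, zero_mul, zero_mul]


lemma herm_trace_eq {q : ℕ} {M : Matrix (Fin q) (Fin q) ℝ} (hM : M.IsHermitian) :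
    M.trace = ∑ i, hM.eigenvalues i := by
  conv_lhs => rw [hM.spectral_theorem, Unitary.conjStarAlgAut_apply]
  rw [Matrix.trace_mul_cycle]
  simp [Matrix.mem_unitaryGroup_iff'.mp (hM.eigenvectorUnitary).2, Matrix.trace_diagonal]

open scoped MatrixOrder in
lemma key_dempster {q : ℕ} {Sig B : Matrix (Fin q) (Fin q) ℝ}
    (hSig : Sig.PosDef) (hB : B.PosDef) :
    (q : ℝ) + Real.log B.det ≤ (Sig⁻¹ * B).trace + Real.log Sig.det ∧
    ((Sig⁻¹ * B).trace + Real.log Sig.det = (q : ℝ) + Real.log B.det ↔ Sig = B) := by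
  set R := CFC.sqrt B with hRdef
  have hR2 : R * R = B := CFC.sqrt_mul_sqrt_self B hB.posSemidef.nonneg
  have hRH : R.IsHermitian := (CFC.sqrt_nonneg B).posSemidef.1
  have hdetB : 0 < B.det := hB.det_pos
  have hdetS : 0 < Sig.det := hSig.det_pos
  have hdetR : R.det ≠ 0 := by
    intro h
    rw [← hR2, Matrix.det_mul, h, mul_zero] at hdetB
    exact lt_irrefl _ hdetB
  set M := R * Sig⁻¹ * R with hMdef
  have hMps : M.PosSemidef := by
    have := hSig.inv.posSemidef.mul_mul_conjTranspose_same R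
    rwa [hRH.eq] at this
  have hMH : M.IsHermitian := hMps.1
  have hdetM : M.det = B.det * Sig.det⁻¹ := by
    rw [hMdef, Matrix.det_mul, Matrix.det_mul, Matrix.det_nonsing_inv, Ring.inverse_eq_inv']
    rw [← hR2, Matrix.det_mul]; ring
  have hdetMpos : 0 < M.det := by
    rw [hdetM]; positivity
  set μ := hMH.eigenvalues with hμdef
  have hprod : M.det = ∏ i, μ i := by
    have := hMH.det_eq_prod_eigenvalues
    simpa using this
  have hμpos : ∀ i, 0 < μ i := by
    intro i
    rcases (hMps.eigenvalues_nonneg i).lt_or_eq with h | h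
    · exact h
    · exfalso
      have : M.det = 0 := by
        rw [hprod]; exact Finset.prod_eq_zero (Finset.mem_univ i) h.symm
      rw [this] at hdetMpos; exact lt_irrefl _ hdetMpos
  have htr : (Sig⁻¹ * B).trace = ∑ i, μ i := by
    rw [← herm_trace_eq hMH, hMdef, Matrix.trace_mul_cycle, hR2, Matrix.trace_mul_comm]
  have hlogM : Real.log M.det = Real.log B.det - Real.log Sig.det := by
    rw [hdetM, Real.log_mul (ne_of_gt hdetB) (by positivity), Real.log_inv]; ring
  have hlogsum : Real.log M.det = ∑ i, Real.log (μ i) := by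
    rw [hprod, Real.log_prod (fun i _ => (hμpos i).ne')]
  have hkey : (Sig⁻¹ * B).trace + Real.log Sig.det - ((q : ℝ) + Real.log B.det)
      = ∑ i, (μ i - 1 - Real.log (μ i)) := by
    rw [htr]
    have : Real.log Sig.det - Real.log B.det = - ∑ i, Real.log (μ i) := by
      rw [← hlogsum, hlogM]; ring
    rw [Finset.sum_sub_distrib, Finset.sum_sub_distrib]
    simp only [Finset.sum_const, Finset.card_univ, Fintype.card_fin, nsmul_eq_mul, mul_one]
    linarith [this]
  have hterm : ∀ i, 0 ≤ μ i - 1 - Real.log (μ i) := fun i => by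
    linarith [Real.log_le_sub_one_of_pos (hμpos i)]
  constructor
  · have : 0 ≤ ∑ i, (μ i - 1 - Real.log (μ i)) :=
      Finset.sum_nonneg fun i _ => hterm i
    linarith [hkey]
  constructor
  · intro heq
    -- equality implies all μ i = 1, hence M = 1, hence Sig = B
    have hsum0 : ∑ i, (μ i - 1 - Real.log (μ i)) = 0 := by linarith [hkey]
    have hall : ∀ i, μ i = 1 := by
      intro i
      by_contra h
      have hstrict : 0 < μ i - 1 - Real.log (μ i) := by
        have := Real.log_lt_sub_one_of_pos (hμpos i) h
        linarith
      have : 0 < ∑ j, (μ j - 1 - Real.log (μ j)) := by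
        refine Finset.sum_pos' (fun j _ => hterm j) ⟨i, Finset.mem_univ i, hstrict⟩
      linarith
    have hM1 : M = 1 := by
      have := hMH.spectral_theorem
      rw [this, Unitary.conjStarAlgAut_apply]
      have : Matrix.diagonal (RCLike.ofReal ∘ μ) = (1 : Matrix (Fin q) (Fin q) ℝ) := by
        ext i j
        simp [Matrix.diagonal_apply, Matrix.one_apply, hall i]
      rw [this, mul_one]
      exact Matrix.mem_unitaryGroup_iff.mp (hMH.eigenvectorUnitary).2
    -- R * Sig⁻¹ * R = 1 ⇒ Sig⁻¹ = R⁻¹ * R⁻¹ = B⁻¹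
    have hSinv : Sig⁻¹ = B⁻¹ := by
      have h1 : R⁻¹ * (R * Sig⁻¹ * R) * R⁻¹ = Sig⁻¹ := by
        rw [← Matrix.mul_assoc, Matrix.mul_assoc (R⁻¹ * (R * Sig⁻¹)),
          Matrix.mul_nonsing_inv R (isUnit_iff_ne_zero.mpr hdetR), mul_one,
          ← Matrix.mul_assoc, Matrix.nonsing_inv_mul R (isUnit_iff_ne_zero.mpr hdetR), one_mul]
      rw [← h1, ← hMdef, hM1, mul_one, ← Matrix.mul_inv_rev, hR2]
    calc Sig = Sig⁻¹⁻¹ := (Matrix.nonsing_inv_nonsing_inv Sig (isUnit_iff_ne_zero.mpr hdetS.ne')).symm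
      _ = B⁻¹⁻¹ := by rw [hSinv]
      _ = B := Matrix.nonsing_inv_nonsing_inv B (isUnit_iff_ne_zero.mpr hdetB.ne')
  · intro h
    subst h
    rw [Matrix.nonsing_inv_mul _ (isUnit_iff_ne_zero.mpr hdetS.ne'), Matrix.trace_one]
    simp

/-- `B` is the covariance selection (Dempster) of `A` with respect to the graph `G`:
`B` is positive definite, agrees with `A` on the diagonal and the edge set, and its
inverse vanishes off the diagonal and the edge set. -/
def IsCovSel {q : ℕ} (G : SimpleGraph (Fin q)) (A B : Matrix (Fin q) (Fin q) ℝ) : Prop :=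
  B.PosDef ∧ (∀ i j, (i = j ∨ G.Adj i j) → B i j = A i j) ∧
    ∀ i j, i ≠ j → ¬ G.Adj i j → B⁻¹ i j = 0

theorem stmt_6 (q : ℕ) (G : SimpleGraph (Fin q)) (S B : Matrix (Fin q) (Fin q) ℝ)
    (hS : S.PosDef) (hB : IsCovSel G S B) :
    ∀ Sig : Matrix (Fin q) (Fin q) ℝ, Sig.PosDef →
      (∀ i j, i ≠ j → ¬ G.Adj i j → Sig⁻¹ i j = 0) →
      ((Sig⁻¹ * S).trace + Real.log Sig.det ≥ (B⁻¹ * S).trace + Real.log B.det ∧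
        (B⁻¹ * S).trace + Real.log B.det = (q : ℝ) + Real.log B.det ∧
        ((Sig⁻¹ * S).trace + Real.log Sig.det = (B⁻¹ * S).trace + Real.log B.det ↔
          Sig = B)) := by
  intro Sig hSig hSigsupp
  obtain ⟨hBpd, hBagree, hBinv⟩ := hB
  have h1 : (Sig⁻¹ * S).trace = (Sig⁻¹ * B).trace :=
    trace_eq_of_support G Sig⁻¹ S B hSigsupp hBagree
  have h2 : (B⁻¹ * S).trace = (q : ℝ) := by
    rw [trace_eq_of_support G B⁻¹ S B hBinv hBagree,
      Matrix.nonsing_inv_mul _ (isUnit_iff_ne_zero.mpr hBpd.det_pos.ne'), Matrix.trace_one]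
    simp
  obtain ⟨hle, hiff⟩ := key_dempster hSig hBpd
  refine ⟨?_, by rw [h2], ?_⟩
  · rw [ge_iff_le, h1, h2]; exact hle
  · rw [h1, h2]; exact hiff
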